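/- Let Σ = {a, b}, let (n_j)_{j≥1} be a sequence of integers with n_j ≥ 2, and define α₀ = a, β₀ = b, α_{j+1} = (α_j² β_j)^{n_{j+1}}, β_{j+1} = (β_j² α_j)^{n_{j+1}}. Let N_k = |α_k| and Ñ_k = N_k - 3N_{k-1} for k ≥ 1. Then for every k ≥ 1 and every d with 0 < d ≤ Ñ_k, the word V = α_k β_k (of length 2N_k) is not d-periodic: there exists an index i with 1 ≤ i ≤ 2N_k - d such that V[i] ≠ V[i+d]. -/

import Mathlib

mutual
/-- The word `α_j` over `{a, b}` (with `a := true`, `b := false`):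
`α₀ = a`, `α_{j+1} = (α_j α_j β_j)^{n_{j+1}}`. -/
def wordA (n : ℕ → ℕ) : ℕ → List Bool
  | 0 => [true]
  | j + 1 => (List.replicate (n (j + 1)) (wordA n j ++ wordA n j ++ wordB n j)).flatten

/-- The word `β_j`: `β₀ = b`, `β_{j+1} = (β_j β_j α_j)^{n_{j+1}}`. -/
def wordB (n : ℕ → ℕ) : ℕ → List Bool
  | 0 => [false]
  | j + 1 => (List.replicate (n (j + 1)) (wordB n j ++ wordB n j ++ wordA n j)).flatten
end

/-- `N_k = ∏_{j=1}^k (3 n_j)`, the common length of `α_k` and `β_k`. -/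
def Nlen (n : ℕ → ℕ) (k : ℕ) : ℕ := ∏ j ∈ Finset.Icc 1 k, 3 * n j

lemma flatten_replicate_length (m : ℕ) (l : List Bool) :
    (List.replicate m l).flatten.length = m * l.length := by
  induction m with
  | zero => simp
  | succ m ih => simp [List.replicate_succ, ih]; ring

lemma flatten_replicate_count (x : Bool) (m : ℕ) (l : List Bool) :
    (List.replicate m l).flatten.count x = m * l.count x := by
  induction m with
  | zero => simp
  | succ m ih => simp [List.replicate_succ, List.count_append, ih]; ring

lemma Nlen_zero (n : ℕ → ℕ) : Nlen n 0 = 1 := by simp [Nlen]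

lemma Nlen_succ (n : ℕ → ℕ) (k : ℕ) : Nlen n (k + 1) = Nlen n k * (3 * n (k + 1)) := by
  simp [Nlen, Finset.prod_Icc_succ_top (Nat.le_add_left 1 k)]

lemma Nlen_pos (n : ℕ → ℕ) (hn : ∀ j, 1 ≤ j → 2 ≤ n j) (k : ℕ) : 0 < Nlen n k := by
  induction k with
  | zero => simp [Nlen_zero]
  | succ k ih =>
      rw [Nlen_succ]
      have := hn (k + 1) (by omega)
      positivity

lemma word_length (n : ℕ → ℕ) (k : ℕ) :
    (wordA n k).length = Nlen n k ∧ (wordB n k).length = Nlen n k := by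
  induction k with
  | zero => simp [wordA, wordB, Nlen_zero]
  | succ k ih =>
      constructor
      · rw [wordA, Nlen_succ, flatten_replicate_length]
        simp only [List.length_append, ih.1, ih.2]
        ring
      · rw [wordB, Nlen_succ, flatten_replicate_length]
        simp only [List.length_append, ih.1, ih.2]
        ring

lemma count_lt (n : ℕ → ℕ) (hn : ∀ j, 1 ≤ j → 2 ≤ n j) (k : ℕ) :
    (wordB n k).count true < (wordA n k).count true := by
  induction k with
  | zero => simp [wordA, wordB]
  | succ k ih =>
      rw [wordA, wordB, flatten_replicate_count, flatten_replicate_count]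
      simp only [List.count_append]
      have h2 := hn (k + 1) (by omega)
      have hlt : (wordB n k).count true + (wordB n k).count true + (wordA n k).count true
          < (wordA n k).count true + (wordA n k).count true + (wordB n k).count true := by omega
      exact mul_lt_mul_of_pos_left hlt (by omega)

lemma count_take_flatten (P : List Bool) (hP : 0 < P.length) (x : Bool) :
    ∀ m i, i ≤ m * P.length →
      ((List.replicate m P).flatten.take i).count x
        = (i / P.length) * P.count x + (P.take (i % P.length)).count x := by
  intro m
  induction m with
  | zero => intro i hi; simp at hi; simp [hi]
  | succ m ih =>
      intro i hi
      have hexp : (m + 1) * P.length = m * P.length + P.length := by ring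
      rw [List.replicate_succ, List.flatten_cons]
      rcases lt_or_ge i P.length with h | h
      · rw [Nat.div_eq_of_lt h, Nat.mod_eq_of_lt h]
        rw [List.take_append, Nat.sub_eq_zero_of_le (le_of_lt h)]
        simp
      · rw [List.take_append, List.take_of_length_le h, List.count_append]
        rw [ih (i - P.length) (by omega)]
        rw [Nat.div_eq_sub_div hP h, Nat.mod_eq_sub_mod h]
        ring

lemma count_window (P : List Bool) (hP : 0 < P.length) (x : Bool) (m q : ℕ)
    (h : q + P.length ≤ m * P.length) :
    (((List.replicate m P).flatten.drop q).take P.length).count x = P.count x := by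
  have key := List.take_add (l := (List.replicate m P).flatten) (i := q) (j := P.length)
  have h1 := count_take_flatten P hP x m (q + P.length) h
  have h2 := count_take_flatten P hP x m q (by omega)
  rw [key, List.count_append, h2] at h1
  rw [Nat.add_div_right q hP, Nat.add_mod_right q P.length] at h1
  have hexp : (q / P.length + 1) * P.count x = q / P.length * P.count x + P.count x := by ring
  omega

/-- For `k ≥ 1` and `0 < d ≤ Ñ_k = N_k - 3N_{k-1}`, the word `V = α_k β_k`
is not `d`-periodic: some position `i` (0-indexed, with `i + d < |V| = 2N_k`) satisfies
`V[i] ≠ V[i+d]`. -/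
theorem stmt7 (n : ℕ → ℕ) (hn : ∀ j, 1 ≤ j → 2 ≤ n j) (k : ℕ) (hk : 1 ≤ k) (d : ℕ)
    (hd0 : 0 < d) (hd : d ≤ Nlen n k - 3 * Nlen n (k - 1)) :
    ∃ i : ℕ, i + d < (wordA n k ++ wordB n k).length ∧
      (wordA n k ++ wordB n k).getD i true ≠ (wordA n k ++ wordB n k).getD (i + d) true := by
  by_contra hcon
  push_neg at hcon
  obtain ⟨k', rfl⟩ : ∃ k', k = k' + 1 := ⟨k - 1, by omega⟩
  simp only [Nat.add_sub_cancel] at hd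
  set A' := wordA n k' with hA'
  set B' := wordB n k' with hB'
  set N' := Nlen n k' with hN'
  set N := Nlen n (k' + 1) with hN
  have hN'pos : 0 < N' := Nlen_pos n hn k'
  obtain ⟨m, hm⟩ : ∃ m, n (k' + 1) = m + 1 :=
    ⟨n (k' + 1) - 1, by have := hn (k' + 1) (by omega); omega⟩
  have hm1 : 1 ≤ m := by have := hn (k' + 1) (by omega); omega
  have hNN : N = 3 * m * N' + 3 * N' := by
    rw [hN, Nlen_succ, ← hN', hm]; ring
  have hlenA' : A'.length = N' := (word_length n k').1
  have hlenB' : B'.length = N' := (word_length n k').2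
  set V := wordA n (k' + 1) ++ wordB n (k' + 1) with hV
  have hlenAk : (wordA n (k' + 1)).length = N := (word_length n (k' + 1)).1
  have hlenBk : (wordB n (k' + 1)).length = N := (word_length n (k' + 1)).2
  have hlenV : V.length = N + N := by rw [hV, List.length_append, hlenAk, hlenBk]
  have hdle : d ≤ 3 * m * N' := by omega
  -- iterated periodicity
  have hiter : ∀ t i, i + t * d < N + N → V.getD i true = V.getD (i + t * d) true := by
    intro t
    induction t with
    | zero => intro i _; simp
    | succ t ih =>
        intro i hi
        have hexp : (t + 1) * d = t * d + d := by ring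
        have h1 : i + d < V.length := by rw [hlenV]; omega
        have hstep := hcon i h1
        rw [hstep, ih (i + d) (by omega)]
        congr 1
        omega
  -- structural decomposition
  set u := A' ++ A' ++ B' with hu
  set w := B' ++ B' ++ A' with hw
  have hAk : wordA n (k' + 1) = (List.replicate m u).flatten ++ u := by
    rw [wordA, hm, List.replicate_succ', List.flatten_append]
    simp only [List.flatten_cons, List.flatten_nil, List.append_nil]
    try rw [← hA', ← hB']
    try rw [← hu]
  have hBk : wordB n (k' + 1) = (List.replicate (m + 1) w).flatten := by
    rw [wordB, hm]
    try rw [← hB', ← hA']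
    try rw [← hw]
  have hBk' : wordB n (k' + 1) = w ++ (List.replicate m w).flatten := by
    rw [hBk, List.replicate_succ, List.flatten_cons]
  set Y := (List.replicate m u).flatten ++ A' ++ A' with hY
  set Z := A' ++ (List.replicate m w).flatten with hZ
  have hVdecomp : V = Y ++ (B' ++ B' ++ B') ++ Z := by
    rw [hV, hAk, hBk', hY, hZ, hu, hw]
    simp [List.append_assoc]
  have hlenY : Y.length = 3 * m * N' + 2 * N' := by
    rw [hY]
    simp only [List.length_append, flatten_replicate_length, hu, hlenA', hlenB']
    ring
  set L := 3 * N' with hL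
  set p₀ := 3 * m * N' + 2 * N' with hp₀
  -- window 1 : V[p₀, p₀+L) = B'B'B'
  have hW1 : (V.drop p₀).take L = B' ++ B' ++ B' := by
    rw [hVdecomp, List.append_assoc, ← hlenY, List.drop_left]
    exact List.take_left' (by simp only [List.length_append, hlenB', hL]; ring)
  -- shift amount D = t₀ * d with N' < D ≤ N' + d
  set t₀ := N' / d + 1 with ht₀
  obtain ⟨D, hD⟩ : ∃ x, x = t₀ * d := ⟨_, rfl⟩
  have hDexp : D = N' / d * d + d := by rw [hD, ht₀]; ring
  have hdm := Nat.div_add_mod N' d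
  have hmod := Nat.mod_lt N' hd0
  have hmc : d * (N' / d) = N' / d * d := by ring
  have hDge : N' < D := by omega
  have hDle : D ≤ N' + d := by omega
  set q := D - N' with hq
  have hqd : q ≤ d := by omega
  have hp₀D : p₀ + D = N + q := by omega
  -- window 2 : V[p₀+D, p₀+D+L) is a window of wordB at offset q
  have hW2 : (V.drop (p₀ + D)).take L = ((wordB n (k' + 1)).drop q).take L := by
    rw [hp₀D, hV, ← hlenAk, List.drop_length_add_append]
  have hwlen : w.length = L := by
    rw [hw]; simp only [List.length_append, hlenA', hlenB', hL]; ring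
  have hmL : (m + 1) * w.length = 3 * m * N' + 3 * N' := by
    rw [hwlen, hL]; ring
  have hcount2 : (((wordB n (k' + 1)).drop q).take L).count true
      = B'.count true + B'.count true + A'.count true := by
    have hwin := count_window w (by rw [hwlen, hL]; omega) true (m + 1) q (by omega)
    rw [hwlen] at hwin
    rw [hBk, hwin, hw]
    simp only [List.count_append]
    try omega
  -- the two windows are equal, by iterated periodicity
  have hwineq : (V.drop p₀).take L = (V.drop (p₀ + D)).take L := by
    have hlen1 : ((V.drop p₀).take L).length = L := by
      simp only [List.length_take, List.length_drop, hlenV]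
      omega
    have hlen2 : ((V.drop (p₀ + D)).take L).length = L := by
      simp only [List.length_take, List.length_drop, hlenV]
      omega
    apply List.ext_getElem (by rw [hlen1, hlen2])
    intro i h1 h2
    rw [List.getElem_take, List.getElem_drop, List.getElem_take, List.getElem_drop]
    have hiL : i < L := by rw [hlen1] at h1; exact h1
    have hrange : (p₀ + i) + t₀ * d < N + N := by rw [← hD]; omega
    have hper := hiter t₀ (p₀ + i) hrange
    rw [List.getD_eq_getElem V true (by rw [hlenV]; omega : p₀ + i < V.length),
        List.getD_eq_getElem V true
          (by rw [hlenV, ← hD]; omega : p₀ + i + t₀ * d < V.length)] at hper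
    convert hper using 2
    omega
  -- contradiction via counts
  have hc := count_lt n hn k'
  have hfinal : (B' ++ B' ++ B').count true
      = B'.count true + B'.count true + A'.count true := by
    rw [← hW1, hwineq, hW2, hcount2]
  simp only [List.count_append] at hfinal
  rw [← hA', ← hB'] at hc
  omega
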